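/- There exist constants k₁, k₂ > 0 such that for every Schwartz function f : ℝ → ℂ, k₁·(‖f''‖² + ‖x ↦ x²·f(x)‖² + ‖f‖²) ≤ ‖x ↦ -f''(x) + x²·f(x)‖² + ‖f‖² ≤ k₂·(‖f''‖² + ‖x ↦ x²·f(x)‖² + ‖f‖²). -/

import Mathlib

open MeasureTheory

/-- The `L²(ℝ)` norm of a function `f : ℝ → ℂ`. -/
noncomputable def L2N (f : ℝ → ℂ) : ℝ := (∫ x : ℝ, ‖f x‖ ^ 2) ^ ((1 : ℝ) / 2)

lemma cnorm_sq (u : ℂ) : ‖u‖ ^ 2 = u.re ^ 2 + u.im ^ 2 := by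
  rw [Complex.sq_norm, Complex.normSq_apply]; ring

lemma integrable_aux {E : Type*} [NormedAddCommGroup E] (g h : SchwartzMap ℝ ℂ) (k : ℕ) (c : ℝ)
    (hc : 0 ≤ c) (F : ℝ → E) (hF : AEStronglyMeasurable F volume)
    (hb : ∀ x : ℝ, ‖F x‖ ≤ c * (‖x‖ ^ k * (‖g x‖ * ‖h x‖))) : Integrable F volume := by
  have hint := (((g.integrable_pow_mul volume k).const_mul
    ((SchwartzMap.seminorm ℝ 0 0) h)).const_mul c)
  refine hint.mono' hF (Filter.Eventually.of_forall fun x => (hb x).trans ?_)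
  have h1 : ‖h x‖ ≤ (SchwartzMap.seminorm ℝ 0 0) h := SchwartzMap.norm_le_seminorm ℝ h x
  have h2 : (0:ℝ) ≤ ‖x‖ ^ k * ‖g x‖ := by positivity
  nlinarith [mul_nonneg hc h2]

lemma norm_negadd_sq (z w : ℂ) :
    ‖-z + w‖ ^ 2 = ‖z‖ ^ 2 + ‖w‖ ^ 2 - 2 * ((starRingEnd ℂ) w * z).re := by
  simp only [cnorm_sq, Complex.add_re, Complex.add_im, Complex.neg_re, Complex.neg_im,
    Complex.mul_re, Complex.mul_im, Complex.conj_re, Complex.conj_im]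
  ring

lemma L2N_sq (g : ℝ → ℂ) : L2N g ^ 2 = ∫ x : ℝ, ‖g x‖ ^ 2 := by
  have h : (0:ℝ) ≤ ∫ x : ℝ, ‖g x‖ ^ 2 := integral_nonneg fun x => by positivity
  rw [L2N, ← Real.rpow_natCast ((∫ x : ℝ, ‖g x‖ ^ 2) ^ ((1:ℝ)/2)) 2, ← Real.rpow_mul h]
  norm_num

/-- Graph-norm equivalence for the harmonic oscillator `T = -d²/dx² + x²`. -/
theorem stmt_0 :
    ∃ k₁ k₂ : ℝ, 0 < k₁ ∧ 0 < k₂ ∧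
      ∀ f : SchwartzMap ℝ ℂ,
        k₁ * (L2N (deriv (deriv ⇑f)) ^ 2 + L2N (fun x : ℝ => (x : ℂ) ^ 2 * f x) ^ 2
            + L2N ⇑f ^ 2)
          ≤ L2N (fun x : ℝ => -(deriv (deriv ⇑f) x) + (x : ℂ) ^ 2 * f x) ^ 2 + L2N ⇑f ^ 2 ∧
        L2N (fun x : ℝ => -(deriv (deriv ⇑f) x) + (x : ℂ) ^ 2 * f x) ^ 2 + L2N ⇑f ^ 2
          ≤ k₂ * (L2N (deriv (deriv ⇑f)) ^ 2 + L2N (fun x : ℝ => (x : ℂ) ^ 2 * f x) ^ 2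
            + L2N ⇑f ^ 2) := by
  refine ⟨1/3, 2, by norm_num, by norm_num, fun f => ?_⟩
  set g1 := SchwartzMap.derivCLM ℝ ℂ f with hg1def
  set g2 := SchwartzMap.derivCLM ℝ ℂ g1 with hg2def
  have hd1 : deriv ⇑f = ⇑g1 :=
    funext fun x => (SchwartzMap.derivCLM_apply (𝕜 := ℝ) (f := f) (x := x)).symm
  have hd2 : deriv (deriv ⇑f) = ⇑g2 := by
    rw [hd1]
    exact funext fun x => (SchwartzMap.derivCLM_apply (𝕜 := ℝ) (f := g1) (x := x)).symm
  rw [hd2]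
  simp only [L2N_sq]
  -- derivative facts
  have hf' : ∀ x : ℝ, HasDerivAt (⇑f) (g1 x) x := fun x => by
    have := (f.differentiableAt (x := x)).hasDerivAt
    rwa [← SchwartzMap.derivCLM_apply (𝕜 := ℝ)] at this
  have hg1' : ∀ x : ℝ, HasDerivAt (⇑g1) (g2 x) x := fun x => by
    have := (g1.differentiableAt (x := x)).hasDerivAt
    rwa [← SchwartzMap.derivCLM_apply (𝕜 := ℝ)] at this
  have h0 : ∀ t : ℝ, HasDerivAt (fun y : ℝ => (y:ℂ)) 1 t := fun t => by
    simpa using (hasDerivAt_id t).ofReal_comp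
  have hsq : ∀ x : ℝ, HasDerivAt (fun y : ℝ => (y:ℂ)^2) (2*(x:ℂ)) x := fun x => by
    have h2 := (h0 x).mul (h0 x)
    simp only [← sq] at h2
    refine h2.congr_deriv ?_
    ring
  have hP : ∀ x : ℝ, HasDerivAt (fun y : ℝ => (y:ℂ)^2 * f y)
      (2*(x:ℂ)*f x + (x:ℂ)^2 * g1 x) x := fun x => (hsq x).mul (hf' x)
  have hconj : ∀ (c : ℝ → ℂ) (c' : ℂ) (x : ℝ), HasDerivAt c c' x →
      HasDerivAt (fun y => (starRingEnd ℂ) (c y)) ((starRingEnd ℂ) c') x := by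
    intro c c' x hc
    have h := ((RCLike.conjCLE (K := ℂ)).toContinuousLinearMap.hasFDerivAt
      (x := c x)).comp_hasDerivAt x hc
    simp only [Function.comp_def, ContinuousLinearEquiv.coe_coe, RCLike.conjCLE_apply] at h
    exact h
  have hu : ∀ x : ℝ, HasDerivAt (fun y : ℝ => (starRingEnd ℂ) ((y:ℂ)^2 * f y))
      ((starRingEnd ℂ) (2*(x:ℂ)*f x + (x:ℂ)^2 * g1 x)) x := fun x => hconj _ _ x (hP x)
  have hconjf : ∀ x : ℝ, HasDerivAt (fun y : ℝ => (starRingEnd ℂ) (f y))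
      ((starRingEnd ℂ) (g1 x)) x := fun x => hconj _ _ x (hf' x)
  have hv : ∀ x : ℝ, HasDerivAt (fun y : ℝ => ‖f y‖^2)
      (2 * (g1 x * (starRingEnd ℂ) (f x)).re) x := by
    intro x
    have hmul : HasDerivAt (fun y : ℝ => f y * (starRingEnd ℂ) (f y))
        (g1 x * (starRingEnd ℂ) (f x) + f x * (starRingEnd ℂ) (g1 x)) x :=
      (hf' x).mul (hconjf x)
    have hre := (Complex.reCLM.hasFDerivAt
      (x := f x * (starRingEnd ℂ) (f x))).comp_hasDerivAt x hmul
    simp only [Function.comp_def, Complex.reCLM_apply] at hre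
    have heq : (fun y : ℝ => (f y * (starRingEnd ℂ) (f y)).re)
        = fun y : ℝ => ‖f y‖^2 := by
      funext y
      rw [Complex.mul_conj, ← Complex.normSq_eq_norm_sq, Complex.ofReal_re]
    rw [heq] at hre
    refine hre.congr_deriv ?_
    simp only [Complex.add_re, Complex.mul_re, Complex.conj_re, Complex.conj_im]
    ring
  -- continuity facts
  have cf : Continuous (⇑f) := f.continuous
  have cg1 : Continuous (⇑g1) := g1.continuous
  have cg2 : Continuous (⇑g2) := g2.continuous
  have cP : Continuous (fun x : ℝ => (x:ℂ)^2 * f x) :=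
    ((Complex.continuous_ofReal.pow 2).mul cf)
  have cconj : Continuous (starRingEnd ℂ) := Complex.continuous_conj
  -- integrability facts
  have intA : Integrable (fun x : ℝ => ‖g2 x‖^2) volume := by
    refine integrable_aux g2 g2 0 1 zero_le_one _ ((cg2.norm.pow 2).aestronglyMeasurable) fun x => ?_
    rw [Real.norm_eq_abs, abs_of_nonneg (by positivity)]
    simp [sq]
  have intB : Integrable (fun x : ℝ => ‖(x:ℂ)^2 * f x‖^2) volume := by
    refine integrable_aux f f 4 1 zero_le_one _ ((cP.norm.pow 2).aestronglyMeasurable) fun x => ?_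
    rw [Real.norm_eq_abs, abs_of_nonneg (by positivity)]
    simp only [norm_mul, norm_pow, Complex.norm_real, Real.norm_eq_abs]
    have : |x| ^ 2 * ‖f x‖ * (|x| ^ 2 * ‖f x‖) ≤ 1 * (|x| ^ 4 * (‖f x‖ * ‖f x‖)) := by
      rw [one_mul]; ring_nf; rfl
    calc (|x| ^ 2 * ‖f x‖) ^ 2 = |x| ^ 2 * ‖f x‖ * (|x| ^ 2 * ‖f x‖) := by ring
    _ ≤ 1 * (|x| ^ 4 * (‖f x‖ * ‖f x‖)) := this
    _ = 1 * (‖x‖ ^ 4 * (‖f x‖ * ‖f x‖)) := by rw [Real.norm_eq_abs]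
  have intC : Integrable (fun x : ℝ => ‖f x‖^2) volume := by
    refine integrable_aux f f 0 1 zero_le_one _ ((cf.norm.pow 2).aestronglyMeasurable) fun x => ?_
    rw [Real.norm_eq_abs, abs_of_nonneg (by positivity)]
    simp [sq]
  have intD : Integrable (fun x : ℝ => x^2 * ‖g1 x‖^2) volume := by
    refine integrable_aux g1 g1 2 1 zero_le_one _
      (((continuous_pow 2).mul (cg1.norm.pow 2)).aestronglyMeasurable) fun x => ?_
    rw [Real.norm_eq_abs, abs_of_nonneg (by positivity)]
    rw [one_mul, Real.norm_eq_abs, ← sq_abs x]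
    exact le_of_eq (by ring)
  -- complex integrands
  have intCross : Integrable (fun x : ℝ => (starRingEnd ℂ) ((x:ℂ)^2 * f x) * g2 x) volume := by
    refine integrable_aux f g2 2 1 zero_le_one _
      (((cconj.comp cP).mul cg2).aestronglyMeasurable) fun x => ?_
    rw [one_mul, norm_mul, RCLike.norm_conj, norm_mul, norm_pow, Complex.norm_real]
    exact le_of_eq (by ring)
  have intCrossRe : Integrable (fun x : ℝ => ((starRingEnd ℂ) ((x:ℂ)^2 * f x) * g2 x).re)
      volume := by
    refine integrable_aux f g2 2 1 zero_le_one _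
      ((Complex.continuous_re.comp ((cconj.comp cP).mul cg2)).aestronglyMeasurable) fun x => ?_
    calc ‖((starRingEnd ℂ) ((x:ℂ)^2 * f x) * g2 x).re‖
        ≤ ‖(starRingEnd ℂ) ((x:ℂ)^2 * f x) * g2 x‖ := by
          rw [Real.norm_eq_abs]; exact Complex.abs_re_le_norm _
    _ = 1 * (‖x‖^2 * (‖f x‖ * ‖g2 x‖)) := by
          rw [one_mul, norm_mul, RCLike.norm_conj, norm_mul, norm_pow, Complex.norm_real]
          ring
  have int_u'v : Integrable
      (fun x : ℝ => (starRingEnd ℂ) (2*(x:ℂ)*f x + (x:ℂ)^2 * g1 x) * g1 x) volume := by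
    have i1 : Integrable (fun x : ℝ => (starRingEnd ℂ) (2*(x:ℂ)*f x) * g1 x) volume := by
      refine integrable_aux f g1 1 2 (by norm_num) _
        (((cconj.comp ((continuous_const.mul Complex.continuous_ofReal).mul cf)).mul
          cg1).aestronglyMeasurable) fun x => ?_
      rw [norm_mul, RCLike.norm_conj, norm_mul, norm_mul, Complex.norm_real]
      simp only [Complex.norm_ofNat, Real.norm_eq_abs]
      exact le_of_eq (by ring)
    have i2 : Integrable (fun x : ℝ => (starRingEnd ℂ) ((x:ℂ)^2 * g1 x) * g1 x) volume := by
      refine integrable_aux g1 g1 2 1 zero_le_one _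
        (((cconj.comp ((Complex.continuous_ofReal.pow 2).mul cg1)).mul
          cg1).aestronglyMeasurable) fun x => ?_
      rw [one_mul, norm_mul, RCLike.norm_conj, norm_mul, norm_pow, Complex.norm_real]
      exact le_of_eq (by ring)
    refine (i1.add i2).congr (Filter.Eventually.of_forall fun x => ?_)
    simp only [Pi.add_apply, map_add]
    ring
  have int_uv : Integrable (fun x : ℝ => (starRingEnd ℂ) ((x:ℂ)^2 * f x) * g1 x) volume := by
    refine integrable_aux f g1 2 1 zero_le_one _
      (((cconj.comp cP).mul cg1).aestronglyMeasurable) fun x => ?_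
    rw [one_mul, norm_mul, RCLike.norm_conj, norm_mul, norm_pow, Complex.norm_real]
    exact le_of_eq (by ring)
  have intacross1 : Integrable (fun x : ℝ => 2*x*(g1 x * (starRingEnd ℂ) (f x)).re) volume := by
    refine integrable_aux g1 f 1 2 (by norm_num) _
      (((continuous_const.mul continuous_id).mul
        (Complex.continuous_re.comp (cg1.mul (cconj.comp cf)))).aestronglyMeasurable) fun x => ?_
    rw [norm_mul, norm_mul]
    simp only [Real.norm_eq_abs, Complex.norm_real]
    have h1 : |(g1 x * (starRingEnd ℂ) (f x)).re| ≤ ‖g1 x‖ * ‖f x‖ := by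
      rw [← RCLike.norm_conj (f x), ← norm_mul]
      exact Complex.abs_re_le_norm _
    have h2 : |(2:ℝ)| = 2 := by norm_num
    rw [h2]
    calc 2 * |x| * |(g1 x * (starRingEnd ℂ) (f x)).re| ≤ 2 * |x| * (‖g1 x‖ * ‖f x‖) := by
          have : (0:ℝ) ≤ 2 * |x| := by positivity
          exact mul_le_mul_of_nonneg_left h1 this
    _ = 2 * (|x| ^ 1 * (‖g1 x‖ * ‖f x‖)) := by ring
  have intIBP2uv' : Integrable (fun x : ℝ => x * (2*(g1 x * (starRingEnd ℂ) (f x)).re)) volume := by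
    refine intacross1.congr (Filter.Eventually.of_forall fun x => ?_)
    ring
  have intIBP2uv : Integrable (fun x : ℝ => x * ‖f x‖^2) volume := by
    refine integrable_aux f f 1 1 zero_le_one _
      ((continuous_id.mul (cf.norm.pow 2)).aestronglyMeasurable) fun x => ?_
    rw [one_mul, norm_mul, Real.norm_eq_abs (‖f x‖^2), abs_of_nonneg (by positivity), pow_one]
    exact le_of_eq (by ring)
  -- IBP 1 (complex)
  have hIBP1 : ∫ x : ℝ, (starRingEnd ℂ) ((x:ℂ)^2 * f x) * g2 x
      = -∫ x : ℝ, (starRingEnd ℂ) (2*(x:ℂ)*f x + (x:ℂ)^2 * g1 x) * g1 x :=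
    MeasureTheory.integral_mul_deriv_eq_deriv_mul_of_integrable (fun x _ => hu x) (fun x _ => hg1' x) intCross int_u'v int_uv
  -- IBP 2 (real)
  have hIBP2 : ∫ x : ℝ, x * (2*(g1 x * (starRingEnd ℂ) (f x)).re)
      = -∫ x : ℝ, (1:ℝ) * ‖f x‖^2 := by
    have := MeasureTheory.integral_mul_deriv_eq_deriv_mul_of_integrable
      (u := fun x : ℝ => x) (u' := fun _ : ℝ => (1:ℝ))
      (v := fun x : ℝ => ‖f x‖^2) (v' := fun x : ℝ => 2*(g1 x * (starRingEnd ℂ) (f x)).re)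
      (fun x _ => hasDerivAt_id x) (fun x _ => hv x) intIBP2uv'
      (intC.congr (Filter.Eventually.of_forall fun x => by simp [Pi.mul_apply]))
      (intIBP2uv.congr (Filter.Eventually.of_forall fun x => by simp [Pi.mul_apply]))
    exact this
  have hIBP2' : ∫ x : ℝ, 2*x*(g1 x * (starRingEnd ℂ) (f x)).re = -∫ x : ℝ, ‖f x‖^2 := by
    rw [show (fun x : ℝ => 2*x*(g1 x * (starRingEnd ℂ) (f x)).re)
      = fun x : ℝ => x * (2*(g1 x * (starRingEnd ℂ) (f x)).re) from funext fun x => by ring,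
      hIBP2]
    congr 1
    exact integral_congr_ae (Filter.Eventually.of_forall fun x => by ring)
  -- compute the cross term
  have hsplit : ∫ x : ℝ, ((starRingEnd ℂ) (2*(x:ℂ)*f x + (x:ℂ)^2 * g1 x) * g1 x).re
      = (∫ x : ℝ, 2*x*(g1 x * (starRingEnd ℂ) (f x)).re) + ∫ x : ℝ, x^2 * ‖g1 x‖^2 := by
    rw [← integral_add intacross1 intD]
    refine integral_congr_ae (Filter.Eventually.of_forall fun x => ?_)
    simp only [map_add, map_mul, Complex.conj_ofReal, map_ofNat, add_mul, Complex.add_re,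
      cnorm_sq, Complex.mul_re, Complex.mul_im, Complex.conj_re, Complex.conj_im,
      ← Complex.ofReal_pow, Complex.ofReal_re, Complex.ofReal_im, Complex.re_ofNat,
      Complex.im_ofNat, Complex.mul_re, Complex.mul_im]
    ring
  have hE : ∫ x : ℝ, ((starRingEnd ℂ) ((x:ℂ)^2 * f x) * g2 x).re
      = (∫ x : ℝ, ‖f x‖^2) - ∫ x : ℝ, x^2 * ‖g1 x‖^2 := by
    have h1 := integral_re (μ := volume) (𝕜 := ℂ) intCross
    have h2 := integral_re (μ := volume) (𝕜 := ℂ) int_u'v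
    rw [RCLike.re_to_complex] at h1 h2
    simp only [RCLike.re_to_complex] at h1 h2
    rw [h1, hIBP1, Complex.neg_re, ← h2, hsplit, hIBP2']
    ring
  -- expand T
  have hT : ∫ x : ℝ, ‖-(g2 x) + (x:ℂ)^2 * f x‖^2
      = (∫ x : ℝ, ‖g2 x‖^2) + (∫ x : ℝ, ‖(x:ℂ)^2 * f x‖^2)
        - 2 * ∫ x : ℝ, ((starRingEnd ℂ) ((x:ℂ)^2 * f x) * g2 x).re := by
    have hAB : Integrable (fun a : ℝ => ‖g2 a‖^2 + ‖(a:ℂ)^2 * f a‖^2) volume := intA.add intB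
    rw [← integral_const_mul 2, ← integral_add intA intB,
      ← integral_sub hAB (intCrossRe.const_mul 2)]
    refine integral_congr_ae (Filter.Eventually.of_forall fun x => ?_)
    exact norm_negadd_sq (g2 x) ((x:ℂ)^2 * f x)
  -- nonnegativity and bounds
  have hC0 : (0:ℝ) ≤ ∫ x : ℝ, ‖f x‖^2 := integral_nonneg fun x => by positivity
  have hD0 : (0:ℝ) ≤ ∫ x : ℝ, x^2 * ‖g1 x‖^2 := integral_nonneg fun x => by positivity
  have hT0 : (0:ℝ) ≤ ∫ x : ℝ, ‖-(g2 x) + (x:ℂ)^2 * f x‖^2 :=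
    integral_nonneg fun x => by positivity
  have hEup : -(∫ x : ℝ, ((starRingEnd ℂ) ((x:ℂ)^2 * f x) * g2 x).re)
      ≤ ((∫ x : ℝ, ‖g2 x‖^2) + ∫ x : ℝ, ‖(x:ℂ)^2 * f x‖^2)/2 := by
    have hpt : ∀ x : ℝ, -(((starRingEnd ℂ) ((x:ℂ)^2 * f x) * g2 x).re)
        ≤ (‖g2 x‖^2 + ‖(x:ℂ)^2 * f x‖^2)/2 := by
      intro x
      have h1 : |((starRingEnd ℂ) ((x:ℂ)^2 * f x) * g2 x).re|
          ≤ ‖(x:ℂ)^2 * f x‖ * ‖g2 x‖ := by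
        rw [← RCLike.norm_conj ((x:ℂ)^2 * f x), ← norm_mul]
        exact Complex.abs_re_le_norm _
      have h3 := neg_abs_le (((starRingEnd ℂ) ((x:ℂ)^2 * f x) * g2 x).re)
      nlinarith [sq_nonneg (‖(x:ℂ)^2 * f x‖ - ‖g2 x‖)]
    have hmono := integral_mono
      (f := fun x : ℝ => -(((starRingEnd ℂ) ((x:ℂ)^2 * f x) * g2 x).re))
      (g := fun x : ℝ => (‖g2 x‖^2 + ‖(x:ℂ)^2 * f x‖^2)/2)
      intCrossRe.neg ((intA.add intB).div_const 2) hpt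
    calc -(∫ x : ℝ, ((starRingEnd ℂ) ((x:ℂ)^2 * f x) * g2 x).re)
        = ∫ x : ℝ, -(((starRingEnd ℂ) ((x:ℂ)^2 * f x) * g2 x).re) := (integral_neg _).symm
    _ ≤ ∫ x : ℝ, (‖g2 x‖^2 + ‖(x:ℂ)^2 * f x‖^2)/2 := hmono
    _ = ((∫ x : ℝ, ‖g2 x‖^2) + ∫ x : ℝ, ‖(x:ℂ)^2 * f x‖^2)/2 := by
        rw [integral_div, integral_add intA intB]
  constructor
  · rw [hT, hE]
    have hT0' : (0:ℝ) ≤ (∫ x : ℝ, ‖g2 x‖^2) + (∫ x : ℝ, ‖(x:ℂ)^2 * f x‖^2)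
        - 2 * ((∫ x : ℝ, ‖f x‖^2) - ∫ x : ℝ, x^2 * ‖g1 x‖^2) := by
      rw [hT, hE] at hT0; exact hT0
    linarith
  · rw [hT, hE]
    linarith [hEup, hE, hC0]
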